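/- arXiv:1209.2849 — 2 statements merged into one kernel-verified Lean document; each statement's English description precedes it below -/
import Mathlib

section
/- Let z ∈ ℂ with z ≠ −α and z ∉ 𝒮, suppose the polynomial 𝒫_z(ρ) := (e^{zτ₀}(z+α)/2) ∏_{j=1}^{N}(ρ² − k_j(z)²) + Σ_{i=1}^{N} c_i k_i(z) ∏_{j≠i}(ρ² − k_j(z)²) has 2N pairwise distinct roots ±ρ₁,…,±ρ_N, that k_j(z) ≠ ±ρ_i for all i,j, that the 2N×2N matrix T(z) = [[T⁻, T⁺],[T⁺, T⁻]] with (T^∓)_{j,i} = 1/(k_j(z) ∓ ρ_i) is invertible, and that det S(z) ≠ 0, where S(z) = [[S⁻, S⁺],[S⁺, S⁻]] with (S⁻)_{j,i} = e^{ρ_i}/(k_j(z) − ρ_i) and (S⁺)_{j,i} = e^{−ρ_i}/(k_j(z) + ρ_i). Let y : [−1,1] → ℂ be continuous. Define, for x ∈ [−1,1], the ℂ^{2N}-valued function Γ̂(x) := ∫_{−1}^{x} (y(r)/(z+α)) · diag(P⁻(r), P⁺(r)) · T(z)^{−1} · (−𝟙, 𝟙) dr, where P^∓(r) := diag(e^{∓ρ₁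 r},…,e^{∓ρ_N r}) and (−𝟙, 𝟙) ∈ ℂ^{2N} has first N entries −1 and last N entries 1; set Γ₀ := −S(z)^{−1} · [[S⁻, S⁺, 0, 0],[0, 0, S⁺, S⁻]] · (Γ̂(1), Γ̂(−1)) and Γ(x) := Γ₀ + Γ̂(x), with components denoted γ₁(x),…,γ_N(x),γ_{−1}(x),…,γ_{−N}(x). Then the function q(x) := y(x)/(z+α) + Σ_{i=1}^{N} [ γ_i(x) e^{ρ_i x} + γ_{−i}(x) e^{−ρ_i x} ] satisfies Δ(z)q = y, i.e. (z+α)q(x) − ∫_{−1}^{1} J₀(x,r) e^{−zτ₀} e^{−z|x−r|} q(r) dr = y(x) for all x ∈ [−1,1]. -/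
open Set

/-- The connectivity kernel `J₀(x,r) = Σᵢ cᵢ e^{−μᵢ|x−r|}`. -/
noncomputable def kerJ0 {N : ℕ} (c μ : Fin N → ℂ) (x r : ℝ) : ℂ :=
  ∑ i, c i * Complex.exp (-μ i * ((|x - r| : ℝ) : ℂ))

/-- The operator `Δ(z)` acting on functions on `[-1,1]`. -/
noncomputable def DeltaOp {N : ℕ} (c μ : Fin N → ℂ) (τ0 : ℝ) (α z : ℂ)
    (q : ℝ → ℂ) (x : ℝ) : ℂ :=
  (z + α) * q x -
    ∫ r in (-1 : ℝ)..1,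
      kerJ0 c μ x r * Complex.exp (-z * (τ0 : ℂ)) *
        Complex.exp (-z * ((|x - r| : ℝ) : ℂ)) * q r

/-- The exceptional set `𝒮 = { z : (z+μᵢ)² = (z+μⱼ)² for some i ≠ j }`. -/
def badSet {N : ℕ} (μ : Fin N → ℂ) : Set ℂ :=
  {z : ℂ | ∃ i j : Fin N, i ≠ j ∧ (z + μ i) ^ 2 = (z + μ j) ^ 2}

/-- The characteristic polynomial
`𝒫_z(ρ) = (e^{zτ₀}(z+α)/2)·∏ⱼ(ρ²−kⱼ²) + Σᵢ cᵢ kᵢ ∏_{j≠i}(ρ²−kⱼ²)`, `kᵢ = z+μᵢ`. -/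
noncomputable def charP {N : ℕ} (c μ : Fin N → ℂ) (τ0 : ℝ) (α z ρ : ℂ) : ℂ :=
  Complex.exp (z * (τ0 : ℂ)) * (z + α) / 2 * ∏ j, (ρ ^ 2 - (z + μ j) ^ 2)
    + ∑ i, c i * (z + μ i) * ∏ j ∈ Finset.univ.erase i, (ρ ^ 2 - (z + μ j) ^ 2)

/-- The `2N×2N` block matrix `S(z) = [[S⁻,S⁺],[S⁺,S⁻]]` with
`(S⁻)_{j,i} = e^{ρᵢ}/(kⱼ−ρᵢ)`, `(S⁺)_{j,i} = e^{−ρᵢ}/(kⱼ+ρᵢ)`. -/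
noncomputable def Smat {N : ℕ} (μ : Fin N → ℂ) (z : ℂ) (ρ : Fin N → ℂ) :
    Matrix (Fin N ⊕ Fin N) (Fin N ⊕ Fin N) ℂ :=
  Matrix.fromBlocks
    (Matrix.of fun j i => Complex.exp (ρ i) / (z + μ j - ρ i))
    (Matrix.of fun j i => Complex.exp (-ρ i) / (z + μ j + ρ i))
    (Matrix.of fun j i => Complex.exp (-ρ i) / (z + μ j + ρ i))
    (Matrix.of fun j i => Complex.exp (ρ i) / (z + μ j - ρ i))

/-- The `2N×2N` block matrix `T(z) = [[T⁻,T⁺],[T⁺,T⁻]]` with `(T^∓)_{j,i} = 1/(kⱼ ∓ ρᵢ)`. -/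
noncomputable def Tmat {N : ℕ} (μ : Fin N → ℂ) (z : ℂ) (ρ : Fin N → ℂ) :
    Matrix (Fin N ⊕ Fin N) (Fin N ⊕ Fin N) ℂ :=
  Matrix.fromBlocks
    (Matrix.of fun j i => 1 / (z + μ j - ρ i))
    (Matrix.of fun j i => 1 / (z + μ j + ρ i))
    (Matrix.of fun j i => 1 / (z + μ j + ρ i))
    (Matrix.of fun j i => 1 / (z + μ j - ρ i))

/-- The block-diagonal matrix `diag(P⁻(r), P⁺(r))` with `P^∓(r) = diag(e^{∓ρᵢ r})`. -/
noncomputable def Pmat {N : ℕ} (ρ : Fin N → ℂ) (r : ℝ) :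
    Matrix (Fin N ⊕ Fin N) (Fin N ⊕ Fin N) ℂ :=
  Matrix.fromBlocks
    (Matrix.diagonal fun i => Complex.exp (-ρ i * (r : ℂ))) 0
    0 (Matrix.diagonal fun i => Complex.exp (ρ i * (r : ℂ)))

/-- The vector `(−𝟙, 𝟙) ∈ ℂ^{2N}`. -/
def vvec (N : ℕ) : Fin N ⊕ Fin N → ℂ := Sum.elim (fun _ => -1) (fun _ => 1)

/-- `Γ̂(x) = ∫_{−1}^{x} (y(r)/(z+α)) · diag(P⁻(r),P⁺(r)) · T(z)⁻¹ · (−𝟙,𝟙) dr`. -/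
noncomputable def GammaHat {N : ℕ} (μ ρ : Fin N → ℂ) (z α : ℂ) (y : ℝ → ℂ) (x : ℝ) :
    Fin N ⊕ Fin N → ℂ :=
  fun j => ∫ r in (-1 : ℝ)..x,
    (y r / (z + α)) * ((Pmat ρ r * (Tmat μ z ρ)⁻¹).mulVec (vvec N)) j

/-- `Γ₀ = −S(z)⁻¹ · [[S⁻,S⁺,0,0],[0,0,S⁺,S⁻]] · (Γ̂(1), Γ̂(−1))`. -/
noncomputable def Gamma0 {N : ℕ} (μ ρ : Fin N → ℂ) (z α : ℂ) (y : ℝ → ℂ) :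
    Fin N ⊕ Fin N → ℂ :=
  -((Smat μ z ρ)⁻¹.mulVec (Sum.elim
      (fun j => (Smat μ z ρ).mulVec (GammaHat μ ρ z α y 1) (Sum.inl j))
      (fun j => (Smat μ z ρ).mulVec (GammaHat μ ρ z α y (-1)) (Sum.inr j))))

/-- `Γ(x) = Γ₀ + Γ̂(x)`. -/
noncomputable def GammaFun {N : ℕ} (μ ρ : Fin N → ℂ) (z α : ℂ) (y : ℝ → ℂ) (x : ℝ) :
    Fin N ⊕ Fin N → ℂ :=
  Gamma0 μ ρ z α y + GammaHat μ ρ z α y x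

/-- The candidate resolvent function
`q(x) = y(x)/(z+α) + Σᵢ (γᵢ(x) e^{ρᵢx} + γ₋ᵢ(x) e^{−ρᵢx})`. -/
noncomputable def qRes {N : ℕ} (μ ρ : Fin N → ℂ) (z α : ℂ) (y : ℝ → ℂ) (x : ℝ) : ℂ :=
  y x / (z + α) + ∑ i,
    (GammaFun μ ρ z α y x (Sum.inl i) * Complex.exp (ρ i * (x : ℂ)) +
     GammaFun μ ρ z α y x (Sum.inr i) * Complex.exp (-ρ i * (x : ℂ)))

open MeasureTheory intervalIntegral
noncomputable section

-- my defs
def ytc (y : ℝ → ℂ) (t : ℝ) : ℂ := y (max (-1) (min 1 t))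

def betaV {N : ℕ} (μ : Fin N → ℂ) (z : ℂ) (ρ : Fin N → ℂ) : Fin N ⊕ Fin N → ℂ :=
  (Tmat μ z ρ)⁻¹.mulVec (vvec N)

lemma ytc_eq (y : ℝ → ℂ) {t : ℝ} (ht : t ∈ Icc (-1:ℝ) 1) : ytc y t = y t := by
  simp [ytc, min_eq_right ht.2, max_eq_right ht.1]

lemma ytc_cont {y : ℝ → ℂ} (hy : ContinuousOn y (Icc (-1) 1)) : Continuous (ytc y) := by
  apply hy.comp_continuous (continuous_const.max (continuous_const.min continuous_id))
  intro t
  constructor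
  · exact le_max_left _ _
  · exact max_le (by norm_num) (min_le_left _ _)

lemma mulVec_expand {N : ℕ} (M : Matrix (Fin N ⊕ Fin N) (Fin N ⊕ Fin N) ℂ)
    (w : Fin N ⊕ Fin N → ℂ) (j : Fin N ⊕ Fin N) :
    M.mulVec w j = (∑ m, M j (Sum.inl m) * w (Sum.inl m)) + ∑ m, M j (Sum.inr m) * w (Sum.inr m) := by
  simp [Matrix.mulVec, dotProduct, Fintype.sum_sum_type]

lemma Pmat_mulVec_inl {N : ℕ} (ρ : Fin N → ℂ) (r : ℝ) (w : Fin N ⊕ Fin N → ℂ) (m : Fin N) :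
    (Pmat ρ r).mulVec w (Sum.inl m) = Complex.exp (-ρ m * r) * w (Sum.inl m) := by
  rw [mulVec_expand]
  simp [Pmat, Matrix.diagonal_apply, Finset.sum_ite_eq', Matrix.fromBlocks]

lemma Pmat_mulVec_inr {N : ℕ} (ρ : Fin N → ℂ) (r : ℝ) (w : Fin N ⊕ Fin N → ℂ) (m : Fin N) :
    (Pmat ρ r).mulVec w (Sum.inr m) = Complex.exp (ρ m * r) * w (Sum.inr m) := by
  rw [mulVec_expand]
  simp [Pmat, Matrix.diagonal_apply, Finset.sum_ite_eq', Matrix.fromBlocks]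

def gP {N : ℕ} (μ ρ : Fin N → ℂ) (z α : ℂ) (y : ℝ → ℂ) (m : Fin N) (s : ℝ) : ℂ :=
  ytc y s / (z + α) * Complex.exp (-ρ m * s) * betaV μ z ρ (Sum.inl m)

def gM {N : ℕ} (μ ρ : Fin N → ℂ) (z α : ℂ) (y : ℝ → ℂ) (m : Fin N) (s : ℝ) : ℂ :=
  ytc y s / (z + α) * Complex.exp (ρ m * s) * betaV μ z ρ (Sum.inr m)

lemma gP_cont {N : ℕ} (μ ρ : Fin N → ℂ) (z α : ℂ) {y : ℝ → ℂ}
    (hy : ContinuousOn y (Icc (-1) 1)) (m : Fin N) : Continuous (gP μ ρ z α y m) :=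
  ((((ytc_cont hy).div_const _).mul (Complex.continuous_exp.comp
    (continuous_const.mul Complex.continuous_ofReal))).mul continuous_const)

lemma gM_cont {N : ℕ} (μ ρ : Fin N → ℂ) (z α : ℂ) {y : ℝ → ℂ}
    (hy : ContinuousOn y (Icc (-1) 1)) (m : Fin N) : Continuous (gM μ ρ z α y m) :=
  ((((ytc_cont hy).div_const _).mul (Complex.continuous_exp.comp
    (continuous_const.mul Complex.continuous_ofReal))).mul continuous_const)

/-- GammaHat in terms of gP/gM on [-1,1]. -/
lemma GammaHat_inl {N : ℕ} (μ ρ : Fin N → ℂ) (z α : ℂ) (y : ℝ → ℂ) {t : ℝ}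
    (ht : t ∈ Icc (-1:ℝ) 1) (m : Fin N) :
    GammaHat μ ρ z α y t (Sum.inl m) = ∫ s in (-1:ℝ)..t, gP μ ρ z α y m s := by
  unfold GammaHat gP
  apply intervalIntegral.integral_congr
  intro r hr
  rw [uIcc_of_le ht.1] at hr
  have hr' : r ∈ Icc (-1:ℝ) 1 := ⟨hr.1, hr.2.trans ht.2⟩
  beta_reduce
  rw [← Matrix.mulVec_mulVec, Pmat_mulVec_inl, ytc_eq y hr']
  show y r / (z + α) * (Complex.exp (-ρ m * ↑r) * betaV μ z ρ (Sum.inl m)) = _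
  ring

lemma GammaHat_inr {N : ℕ} (μ ρ : Fin N → ℂ) (z α : ℂ) (y : ℝ → ℂ) {t : ℝ}
    (ht : t ∈ Icc (-1:ℝ) 1) (m : Fin N) :
    GammaHat μ ρ z α y t (Sum.inr m) = ∫ s in (-1:ℝ)..t, gM μ ρ z α y m s := by
  unfold GammaHat gM
  apply intervalIntegral.integral_congr
  intro r hr
  rw [uIcc_of_le ht.1] at hr
  have hr' : r ∈ Icc (-1:ℝ) 1 := ⟨hr.1, hr.2.trans ht.2⟩
  beta_reduce
  rw [← Matrix.mulVec_mulVec, Pmat_mulVec_inr, ytc_eq y hr']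
  show y r / (z + α) * (Complex.exp (ρ m * ↑r) * betaV μ z ρ (Sum.inr m)) = _
  ring


def γP {N : ℕ} (μ ρ : Fin N → ℂ) (z α : ℂ) (y : ℝ → ℂ) (m : Fin N) (t : ℝ) : ℂ :=
  Gamma0 μ ρ z α y (Sum.inl m) + ∫ s in (-1:ℝ)..t, gP μ ρ z α y m s

def γM {N : ℕ} (μ ρ : Fin N → ℂ) (z α : ℂ) (y : ℝ → ℂ) (m : Fin N) (t : ℝ) : ℂ :=
  Gamma0 μ ρ z α y (Sum.inr m) + ∫ s in (-1:ℝ)..t, gM μ ρ z α y m s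

lemma γP_cont {N : ℕ} (μ ρ : Fin N → ℂ) (z α : ℂ) {y : ℝ → ℂ}
    (hy : ContinuousOn y (Icc (-1) 1)) (m : Fin N) : Continuous (γP μ ρ z α y m) :=
  continuous_const.add (intervalIntegral.continuous_primitive
    (fun a b => (gP_cont μ ρ z α hy m).intervalIntegrable a b) _)

lemma γM_cont {N : ℕ} (μ ρ : Fin N → ℂ) (z α : ℂ) {y : ℝ → ℂ}
    (hy : ContinuousOn y (Icc (-1) 1)) (m : Fin N) : Continuous (γM μ ρ z α y m) :=
  continuous_const.add (intervalIntegral.continuous_primitive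
    (fun a b => (gM_cont μ ρ z α hy m).intervalIntegrable a b) _)

def qT {N : ℕ} (μ ρ : Fin N → ℂ) (z α : ℂ) (y : ℝ → ℂ) (t : ℝ) : ℂ :=
  ytc y t / (z + α) + ∑ m,
    (γP μ ρ z α y m t * Complex.exp (ρ m * t) + γM μ ρ z α y m t * Complex.exp (-ρ m * t))

lemma qT_cont {N : ℕ} (μ ρ : Fin N → ℂ) (z α : ℂ) {y : ℝ → ℂ}
    (hy : ContinuousOn y (Icc (-1) 1)) : Continuous (qT μ ρ z α y) := by
  apply ((ytc_cont hy).div_const _).add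
  apply continuous_finset_sum
  intro m _
  exact ((γP_cont μ ρ z α hy m).mul (Complex.continuous_exp.comp
      (continuous_const.mul Complex.continuous_ofReal))).add
    ((γM_cont μ ρ z α hy m).mul (Complex.continuous_exp.comp
      (continuous_const.mul Complex.continuous_ofReal)))


lemma qRes_eq_qT {N : ℕ} (μ ρ : Fin N → ℂ) (z α : ℂ) (y : ℝ → ℂ) {t : ℝ}
    (ht : t ∈ Icc (-1:ℝ) 1) : qRes μ ρ z α y t = qT μ ρ z α y t := by
  unfold qRes qT
  rw [ytc_eq y ht]
  congr 1
  apply Finset.sum_congr rfl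
  intro m _
  rw [show GammaFun μ ρ z α y t (Sum.inl m) = γP μ ρ z α y m t by
        unfold GammaFun γP; rw [Pi.add_apply, GammaHat_inl μ ρ z α y ht],
      show GammaFun μ ρ z α y t (Sum.inr m) = γM μ ρ z α y m t by
        unfold GammaFun γM; rw [Pi.add_apply, GammaHat_inr μ ρ z α y ht]]

lemma Tmat_mulVec_beta {N : ℕ} (μ : Fin N → ℂ) (z : ℂ) (ρ : Fin N → ℂ)
    (hT : IsUnit (Tmat μ z ρ).det) :
    (Tmat μ z ρ).mulVec (betaV μ z ρ) = vvec N := by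
  unfold betaV
  rw [Matrix.mulVec_mulVec, Matrix.mul_nonsing_inv _ hT, Matrix.one_mulVec]

lemma Trow_inr {N : ℕ} (μ : Fin N → ℂ) (z : ℂ) (ρ : Fin N → ℂ)
    (hT : IsUnit (Tmat μ z ρ).det) (i : Fin N) :
    (∑ m, 1 / (z + μ i + ρ m) * betaV μ z ρ (Sum.inl m))
      + ∑ m, 1 / (z + μ i - ρ m) * betaV μ z ρ (Sum.inr m) = 1 := by
  have h := congrFun (Tmat_mulVec_beta μ z ρ hT) (Sum.inr i)
  rw [mulVec_expand] at h
  simpa [Tmat, vvec] using h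

lemma Trow_inl {N : ℕ} (μ : Fin N → ℂ) (z : ℂ) (ρ : Fin N → ℂ)
    (hT : IsUnit (Tmat μ z ρ).det) (i : Fin N) :
    (∑ m, 1 / (z + μ i - ρ m) * betaV μ z ρ (Sum.inl m))
      + ∑ m, 1 / (z + μ i + ρ m) * betaV μ z ρ (Sum.inr m) = -1 := by
  have h := congrFun (Tmat_mulVec_beta μ z ρ hT) (Sum.inl i)
  rw [mulVec_expand] at h
  simpa [Tmat, vvec] using h

lemma GammaHat_neg_one {N : ℕ} (μ ρ : Fin N → ℂ) (z α : ℂ) (y : ℝ → ℂ) :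
    GammaHat μ ρ z α y (-1) = fun _ => 0 := by
  funext j
  exact intervalIntegral.integral_same

lemma Smat_mulVec_Gamma0 {N : ℕ} (μ ρ : Fin N → ℂ) (z α : ℂ) (y : ℝ → ℂ)
    (hS : (Smat μ z ρ).det ≠ 0) :
    (Smat μ z ρ).mulVec (Gamma0 μ ρ z α y) = -(Sum.elim
      (fun j => (Smat μ z ρ).mulVec (GammaHat μ ρ z α y 1) (Sum.inl j))
      (fun j => (Smat μ z ρ).mulVec (GammaHat μ ρ z α y (-1)) (Sum.inr j))) := by
  unfold Gamma0
  rw [Matrix.mulVec_neg, Matrix.mulVec_mulVec, Matrix.mul_nonsing_inv _ (Ne.isUnit hS),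
    Matrix.one_mulVec]

lemma Sb1 {N : ℕ} (μ ρ : Fin N → ℂ) (z α : ℂ) (y : ℝ → ℂ)
    (hS : (Smat μ z ρ).det ≠ 0) (i : Fin N) :
    (∑ m, Complex.exp (-ρ m) / (z + μ i + ρ m) * γP μ ρ z α y m (-1))
      + ∑ m, Complex.exp (ρ m) / (z + μ i - ρ m) * γM μ ρ z α y m (-1) = 0 := by
  have h := congrFun (Smat_mulVec_Gamma0 μ ρ z α y hS) (Sum.inr i)
  rw [mulVec_expand] at h
  have h2 : (Smat μ z ρ).mulVec (GammaHat μ ρ z α y (-1)) (Sum.inr i) = 0 := by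
    rw [GammaHat_neg_one]
    rw [show (fun _ : Fin N ⊕ Fin N => (0:ℂ)) = 0 from rfl, Matrix.mulVec_zero]
    rfl
  rw [Pi.neg_apply, Sum.elim_inr, h2, neg_zero] at h
  have e1 : ∀ m, γP μ ρ z α y m (-1) = Gamma0 μ ρ z α y (Sum.inl m) := by
    intro m; unfold γP; rw [intervalIntegral.integral_same, add_zero]
  have e2 : ∀ m, γM μ ρ z α y m (-1) = Gamma0 μ ρ z α y (Sum.inr m) := by
    intro m; unfold γM; rw [intervalIntegral.integral_same, add_zero]
  simp only [e1, e2]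
  simpa [Smat] using h

lemma Sb2 {N : ℕ} (μ ρ : Fin N → ℂ) (z α : ℂ) (y : ℝ → ℂ)
    (hS : (Smat μ z ρ).det ≠ 0) (i : Fin N) :
    (∑ m, Complex.exp (ρ m) / (z + μ i - ρ m) * γP μ ρ z α y m 1)
      + ∑ m, Complex.exp (-ρ m) / (z + μ i + ρ m) * γM μ ρ z α y m 1 = 0 := by
  have h := congrFun (Smat_mulVec_Gamma0 μ ρ z α y hS) (Sum.inl i)
  rw [Pi.neg_apply, Sum.elim_inl] at h
  have hadd : (Smat μ z ρ).mulVec (Gamma0 μ ρ z α y + GammaHat μ ρ z α y 1) (Sum.inl i) = 0 := by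
    rw [Matrix.mulVec_add, Pi.add_apply, h]
    ring
  rw [mulVec_expand] at hadd
  have e1 : ∀ m, γP μ ρ z α y m 1 = (Gamma0 μ ρ z α y + GammaHat μ ρ z α y 1) (Sum.inl m) := by
    intro m
    rw [Pi.add_apply, GammaHat_inl μ ρ z α y (by norm_num : (1:ℝ) ∈ Icc (-1:ℝ) 1)]
    rfl
  have e2 : ∀ m, γM μ ρ z α y m 1 = (Gamma0 μ ρ z α y + GammaHat μ ρ z α y 1) (Sum.inr m) := by
    intro m
    rw [Pi.add_apply, GammaHat_inr μ ρ z α y (by norm_num : (1:ℝ) ∈ Icc (-1:ℝ) 1)]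
    rfl
  simp only [e1, e2]
  simpa [Smat] using hadd

lemma charP_coeff {N : ℕ} (c μ : Fin N → ℂ) (τ0 : ℝ) (α z : ℂ) (ρm : ℂ)
    (hroot : charP c μ τ0 α z ρm = 0)
    (hk : ∀ j, ρm ^ 2 - (z + μ j) ^ 2 ≠ 0) :
    Complex.exp (-z * τ0) * ∑ i, c i * (2 * (z + μ i) / ((z + μ i) ^ 2 - ρm ^ 2)) = z + α := by
  set P := ∏ j, (ρm ^ 2 - (z + μ j) ^ 2) with hP
  have hPne : P ≠ 0 := Finset.prod_ne_zero_iff.2 fun j _ => hk j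
  have key : (∑ i, c i * (2 * (z + μ i) / ((z + μ i) ^ 2 - ρm ^ 2))) * P
      = Complex.exp (z * τ0) * (z + α) * P := by
    rw [Finset.sum_mul]
    have step : ∀ i ∈ Finset.univ,
        c i * (2 * (z + μ i) / ((z + μ i) ^ 2 - ρm ^ 2)) * P
          = -2 * (c i * (z + μ i) * ∏ j ∈ Finset.univ.erase i, (ρm ^ 2 - (z + μ j) ^ 2)) := by
      intro i _
      rw [hP, ← Finset.mul_prod_erase Finset.univ _ (Finset.mem_univ i)]
      have hd : (z + μ i) ^ 2 - ρm ^ 2 ≠ 0 := fun h => hk i (by linear_combination -h)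
      field_simp
      ring
    rw [Finset.sum_congr rfl step, ← Finset.mul_sum]
    have hsum : ∑ i, c i * (z + μ i) * ∏ j ∈ Finset.univ.erase i, (ρm ^ 2 - (z + μ j) ^ 2)
        = -(Complex.exp (z * τ0) * (z + α) / 2 * P) := by
      have := hroot
      unfold charP at this
      rw [← hP] at this
      linear_combination this
    rw [hsum]
    ring
  have h2 : ∑ i, c i * (2 * (z + μ i) / ((z + μ i) ^ 2 - ρm ^ 2))
      = Complex.exp (z * τ0) * (z + α) := mul_right_cancel₀ hPne key
  rw [h2, ← mul_assoc, ← Complex.exp_add]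
  ring_nf
  rw [Complex.exp_zero]
  ring

lemma expDeriv (cc : ℂ) (t : ℝ) :
    HasDerivAt (fun r : ℝ => Complex.exp (cc * r)) (cc * Complex.exp (cc * t)) t := by
  have h1 : HasDerivAt (fun w : ℂ => Complex.exp (cc * w)) (cc * Complex.exp (cc * t)) (t : ℂ) := by
    simpa [mul_comm] using (((hasDerivAt_id ((t : ℝ) : ℂ)).const_mul cc).cexp)
  exact h1.comp_ofReal

lemma partsExp (h : ℝ → ℂ) (hcont : Continuous h) (cc Γ0 : ℂ) (hc : cc ≠ 0) (p a b : ℝ) :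
    ∫ r in a..b, Complex.exp (cc * r) * (Γ0 + ∫ s in p..r, h s) =
      Complex.exp (cc * b) / cc * (Γ0 + ∫ s in p..b, h s)
      - Complex.exp (cc * a) / cc * (Γ0 + ∫ s in p..a, h s)
      - (1 / cc) * ∫ s in a..b, Complex.exp (cc * s) * h s := by
  have hu : ∀ t ∈ Set.uIcc a b, HasDerivAt (fun r => Γ0 + ∫ s in p..r, h s) (h t) t := by
    intro t _
    exact (integral_hasDerivAt_right (hcont.intervalIntegrable _ _)
        hcont.aestronglyMeasurable.stronglyMeasurableAtFilter hcont.continuousAt).const_add Γ0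
  have hv : ∀ t ∈ Set.uIcc a b, HasDerivAt (fun r : ℝ => Complex.exp (cc * r) / cc)
      (Complex.exp (cc * t)) t := by
    intro t _
    simpa [mul_div_assoc, mul_div_cancel_left₀ _ hc] using (expDeriv cc t).div_const cc
  have H := integral_mul_deriv_eq_deriv_mul
    (u := fun r => Γ0 + ∫ s in p..r, h s) (u' := h)
    (v := fun r : ℝ => Complex.exp (cc * r) / cc) (v' := fun r : ℝ => Complex.exp (cc * r))
    hu hv (hcont.intervalIntegrable _ _)
    ((Complex.continuous_exp.comp (by continuity)).intervalIntegrable _ _)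
  have e1 : ∫ r in a..b, Complex.exp (cc * r) * (Γ0 + ∫ s in p..r, h s)
      = ∫ r in a..b, (Γ0 + ∫ s in p..r, h s) * Complex.exp (cc * r) := by
    congr 1; ext r; ring
  rw [e1, H]
  have e2 : ∫ s in a..b, h s * (Complex.exp (cc * s) / cc)
      = (1 / cc) * ∫ s in a..b, Complex.exp (cc * s) * h s := by
    rw [← intervalIntegral.integral_const_mul]
    congr 1; ext s; ring
  rw [e2]; ring

lemma contExpC (d : ℂ) : Continuous fun s : ℝ => Complex.exp (d * s) :=
  Complex.continuous_exp.comp (continuous_const.mul Complex.continuous_ofReal)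

lemma leftL {N : ℕ} (μ ρ : Fin N → ℂ) (z α : ℂ) {y : ℝ → ℂ}
    (hy : ContinuousOn y (Icc (-1) 1))
    (hT : IsUnit (Tmat μ z ρ).det) (hS : (Smat μ z ρ).det ≠ 0)
    (i : Fin N)
    (hm : ∀ m, z + μ i - ρ m ≠ 0) (hp : ∀ m, z + μ i + ρ m ≠ 0) (x : ℝ) :
    ∫ r in (-1:ℝ)..x, Complex.exp ((z + μ i) * r) * qT μ ρ z α y r
      = ∑ m, (Complex.exp ((z + μ i + ρ m) * x) / (z + μ i + ρ m) * γP μ ρ z α y m x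
            + Complex.exp ((z + μ i - ρ m) * x) / (z + μ i - ρ m) * γM μ ρ z α y m x) := by
  have hsplit : (∫ r in (-1:ℝ)..x, Complex.exp ((z + μ i) * r) * qT μ ρ z α y r)
      = (∫ r in (-1:ℝ)..x, Complex.exp ((z + μ i) * r) * (ytc y r / (z + α)))
        + ∑ m, ((∫ r in (-1:ℝ)..x, Complex.exp ((z + μ i + ρ m) * r) * γP μ ρ z α y m r)
              + ∫ r in (-1:ℝ)..x, Complex.exp ((z + μ i - ρ m) * r) * γM μ ρ z α y m r) := by
    have e : Set.EqOn (fun r : ℝ => Complex.exp ((z + μ i) * r) * qT μ ρ z α y r)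
        (fun r : ℝ => Complex.exp ((z + μ i) * r) * (ytc y r / (z + α))
          + ∑ m, (Complex.exp ((z + μ i + ρ m) * r) * γP μ ρ z α y m r
                + Complex.exp ((z + μ i - ρ m) * r) * γM μ ρ z α y m r))
        (Set.uIcc (-1) x) := by
      intro r _
      beta_reduce
      unfold qT
      rw [mul_add, Finset.mul_sum]
      congr 1
      apply Finset.sum_congr rfl
      intro m _
      rw [show (z + μ i + ρ m) * (r:ℂ) = (z + μ i) * r + ρ m * r by ring, Complex.exp_add,
          show (z + μ i - ρ m) * (r:ℂ) = (z + μ i) * r + -ρ m * r by ring, Complex.exp_add]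
      ring
    rw [intervalIntegral.integral_congr e,
      intervalIntegral.integral_add
        (f := fun r : ℝ => Complex.exp ((z + μ i) * r) * (ytc y r / (z + α))) (μ := volume)
        (((contExpC _).mul ((ytc_cont hy).div_const _)).intervalIntegrable _ _)
        (by apply Continuous.intervalIntegrable
            apply continuous_finset_sum
            intro m _
            exact ((contExpC _).mul (γP_cont μ ρ z α hy m)).add
              ((contExpC _).mul (γM_cont μ ρ z α hy m))),
      intervalIntegral.integral_finset_sum]
    · congr 1
      apply Finset.sum_congr rfl
      intro m _
      exact intervalIntegral.integral_add
        (((contExpC _).mul (γP_cont μ ρ z α hy m)).intervalIntegrable _ _)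
        (((contExpC _).mul (γM_cont μ ρ z α hy m)).intervalIntegrable _ _)
    · intro m _
      exact (((contExpC _).mul (γP_cont μ ρ z α hy m)).add
        ((contExpC _).mul (γM_cont μ ρ z α hy m))).intervalIntegrable _ _
  set YL := ∫ r in (-1:ℝ)..x, Complex.exp ((z + μ i) * r) * (ytc y r / (z + α)) with hYL
  have hres1 : ∀ m : Fin N, (∫ s in (-1:ℝ)..x, Complex.exp ((z + μ i + ρ m) * s) * gP μ ρ z α y m s)
      = betaV μ z ρ (Sum.inl m) * YL := by
    intro m
    rw [hYL, ← intervalIntegral.integral_const_mul]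
    apply intervalIntegral.integral_congr
    intro s _
    beta_reduce
    unfold gP
    rw [show (z + μ i + ρ m) * (s:ℂ) = (z + μ i) * s + ρ m * s by ring, Complex.exp_add,
        show (-ρ m) * (s:ℂ) = -(ρ m * s) by ring, Complex.exp_neg]
    have h2 : Complex.exp (ρ m * s) * (Complex.exp (ρ m * s))⁻¹ = 1 :=
      mul_inv_cancel₀ (Complex.exp_ne_zero _)
    linear_combination Complex.exp ((z + μ i) * s) * (ytc y s / (z + α))
      * betaV μ z ρ (Sum.inl m) * h2
  have hres2 : ∀ m : Fin N, (∫ s in (-1:ℝ)..x, Complex.exp ((z + μ i - ρ m) * s) * gM μ ρ z α y m s)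
      = betaV μ z ρ (Sum.inr m) * YL := by
    intro m
    rw [hYL, ← intervalIntegral.integral_const_mul]
    apply intervalIntegral.integral_congr
    intro s _
    beta_reduce
    unfold gM
    rw [show (z + μ i - ρ m) * (s:ℂ) = (z + μ i) * s + -(ρ m * s) by ring, Complex.exp_add,
        Complex.exp_neg]
    have h2 : Complex.exp (ρ m * s) * (Complex.exp (ρ m * s))⁻¹ = 1 :=
      mul_inv_cancel₀ (Complex.exp_ne_zero _)
    linear_combination Complex.exp ((z + μ i) * s) * (ytc y s / (z + α))
      * betaV μ z ρ (Sum.inr m) * h2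
  have hparts1 : ∀ m : Fin N, (∫ r in (-1:ℝ)..x, Complex.exp ((z + μ i + ρ m) * r) * γP μ ρ z α y m r)
      = Complex.exp ((z + μ i + ρ m) * x) / (z + μ i + ρ m) * γP μ ρ z α y m x
        - Complex.exp ((z + μ i + ρ m) * (-1:ℝ)) / (z + μ i + ρ m) * γP μ ρ z α y m (-1)
        - (1 / (z + μ i + ρ m)) * (betaV μ z ρ (Sum.inl m) * YL) := by
    intro m
    rw [← hres1 m]
    unfold γP
    exact partsExp _ (gP_cont μ ρ z α hy m) _ _ (hp m) (-1) (-1) x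
  have hparts2 : ∀ m : Fin N, (∫ r in (-1:ℝ)..x, Complex.exp ((z + μ i - ρ m) * r) * γM μ ρ z α y m r)
      = Complex.exp ((z + μ i - ρ m) * x) / (z + μ i - ρ m) * γM μ ρ z α y m x
        - Complex.exp ((z + μ i - ρ m) * (-1:ℝ)) / (z + μ i - ρ m) * γM μ ρ z α y m (-1)
        - (1 / (z + μ i - ρ m)) * (betaV μ z ρ (Sum.inr m) * YL) := by
    intro m
    rw [← hres2 m]
    unfold γM
    exact partsExp _ (gM_cont μ ρ z α hy m) _ _ (hm m) (-1) (-1) x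
  rw [hsplit, Finset.sum_congr rfl (fun m _ => by rw [hparts1 m, hparts2 m])]
  have split3 : ∀ m ∈ Finset.univ,
      (Complex.exp ((z + μ i + ρ m) * x) / (z + μ i + ρ m) * γP μ ρ z α y m x
        - Complex.exp ((z + μ i + ρ m) * (-1:ℝ)) / (z + μ i + ρ m) * γP μ ρ z α y m (-1)
        - (1 / (z + μ i + ρ m)) * (betaV μ z ρ (Sum.inl m) * YL))
      + (Complex.exp ((z + μ i - ρ m) * x) / (z + μ i - ρ m) * γM μ ρ z α y m x
        - Complex.exp ((z + μ i - ρ m) * (-1:ℝ)) / (z + μ i - ρ m) * γM μ ρ z α y m (-1)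
        - (1 / (z + μ i - ρ m)) * (betaV μ z ρ (Sum.inr m) * YL))
      = (Complex.exp ((z + μ i + ρ m) * x) / (z + μ i + ρ m) * γP μ ρ z α y m x
          + Complex.exp ((z + μ i - ρ m) * x) / (z + μ i - ρ m) * γM μ ρ z α y m x)
        - ((Complex.exp ((z + μ i + ρ m) * (-1:ℝ)) / (z + μ i + ρ m) * γP μ ρ z α y m (-1)
          + Complex.exp ((z + μ i - ρ m) * (-1:ℝ)) / (z + μ i - ρ m) * γM μ ρ z α y m (-1))
          + ((1 / (z + μ i + ρ m)) * (betaV μ z ρ (Sum.inl m) * YL)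
            + (1 / (z + μ i - ρ m)) * (betaV μ z ρ (Sum.inr m) * YL))) := by
    intro m _
    ring
  rw [Finset.sum_congr rfl split3, Finset.sum_sub_distrib, Finset.sum_add_distrib,
    Finset.sum_add_distrib]
  have fact1 : (∑ m, (Complex.exp ((z + μ i + ρ m) * (-1:ℝ)) / (z + μ i + ρ m) * γP μ ρ z α y m (-1)
      + Complex.exp ((z + μ i - ρ m) * (-1:ℝ)) / (z + μ i - ρ m) * γM μ ρ z α y m (-1))) = 0 := by
    have e : ∀ m ∈ Finset.univ,
        Complex.exp ((z + μ i + ρ m) * (-1:ℝ)) / (z + μ i + ρ m) * γP μ ρ z α y m (-1)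
          + Complex.exp ((z + μ i - ρ m) * (-1:ℝ)) / (z + μ i - ρ m) * γM μ ρ z α y m (-1)
        = Complex.exp (-(z + μ i)) * (Complex.exp (-ρ m) / (z + μ i + ρ m) * γP μ ρ z α y m (-1)
            + Complex.exp (ρ m) / (z + μ i - ρ m) * γM μ ρ z α y m (-1)) := by
      intro m _
      rw [show ((z + μ i + ρ m) * ((-1:ℝ):ℂ)) = -(z + μ i) + -ρ m by push_cast; ring,
          show ((z + μ i - ρ m) * ((-1:ℝ):ℂ)) = -(z + μ i) + ρ m by push_cast; ring,
          Complex.exp_add, Complex.exp_add]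
      ring
    rw [Finset.sum_congr rfl e, ← Finset.mul_sum, Finset.sum_add_distrib,
      Sb1 μ ρ z α y hS i, mul_zero]
  have fact2 : (∑ m, ((1 / (z + μ i + ρ m)) * (betaV μ z ρ (Sum.inl m) * YL)
      + (1 / (z + μ i - ρ m)) * (betaV μ z ρ (Sum.inr m) * YL))) = YL := by
    have e : ∀ m ∈ Finset.univ,
        (1 / (z + μ i + ρ m)) * (betaV μ z ρ (Sum.inl m) * YL)
          + (1 / (z + μ i - ρ m)) * (betaV μ z ρ (Sum.inr m) * YL)
        = (1 / (z + μ i + ρ m) * betaV μ z ρ (Sum.inl m)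
            + 1 / (z + μ i - ρ m) * betaV μ z ρ (Sum.inr m)) * YL := by
      intro m _; ring
    rw [Finset.sum_congr rfl e, ← Finset.sum_mul, Finset.sum_add_distrib,
      Trow_inr μ z ρ hT i, one_mul]
  rw [fact1, fact2]
  ring

lemma rightR {N : ℕ} (μ ρ : Fin N → ℂ) (z α : ℂ) {y : ℝ → ℂ}
    (hy : ContinuousOn y (Icc (-1) 1))
    (hT : IsUnit (Tmat μ z ρ).det) (hS : (Smat μ z ρ).det ≠ 0)
    (i : Fin N)
    (hm : ∀ m, z + μ i - ρ m ≠ 0) (hp : ∀ m, z + μ i + ρ m ≠ 0) (x : ℝ) :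
    ∫ r in x..(1:ℝ), Complex.exp (-(z + μ i) * r) * qT μ ρ z α y r
      = ∑ m, (-(Complex.exp ((ρ m - (z + μ i)) * x) / (ρ m - (z + μ i))) * γP μ ρ z α y m x
            - Complex.exp ((-ρ m - (z + μ i)) * x) / (-ρ m - (z + μ i)) * γM μ ρ z α y m x) := by
  have hm' : ∀ m, ρ m - (z + μ i) ≠ 0 := fun m h => hm m (by linear_combination -h)
  have hp' : ∀ m, -ρ m - (z + μ i) ≠ 0 := fun m h => hp m (by linear_combination -h)
  have hsplit : (∫ r in x..(1:ℝ), Complex.exp (-(z + μ i) * r) * qT μ ρ z α y r)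
      = (∫ r in x..(1:ℝ), Complex.exp (-(z + μ i) * r) * (ytc y r / (z + α)))
        + ∑ m, ((∫ r in x..(1:ℝ), Complex.exp ((ρ m - (z + μ i)) * r) * γP μ ρ z α y m r)
              + ∫ r in x..(1:ℝ), Complex.exp ((-ρ m - (z + μ i)) * r) * γM μ ρ z α y m r) := by
    have e : Set.EqOn (fun r : ℝ => Complex.exp (-(z + μ i) * r) * qT μ ρ z α y r)
        (fun r : ℝ => Complex.exp (-(z + μ i) * r) * (ytc y r / (z + α))
          + ∑ m, (Complex.exp ((ρ m - (z + μ i)) * r) * γP μ ρ z α y m r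
                + Complex.exp ((-ρ m - (z + μ i)) * r) * γM μ ρ z α y m r))
        (Set.uIcc x 1) := by
      intro r _
      beta_reduce
      unfold qT
      rw [mul_add, Finset.mul_sum]
      congr 1
      apply Finset.sum_congr rfl
      intro m _
      rw [show (ρ m - (z + μ i)) * (r:ℂ) = -(z + μ i) * r + ρ m * r by ring, Complex.exp_add,
          show (-ρ m - (z + μ i)) * (r:ℂ) = -(z + μ i) * r + -ρ m * r by ring, Complex.exp_add]
      ring
    rw [intervalIntegral.integral_congr e,
      intervalIntegral.integral_add
        (f := fun r : ℝ => Complex.exp (-(z + μ i) * r) * (ytc y r / (z + α))) (μ := volume)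
        (((contExpC _).mul ((ytc_cont hy).div_const _)).intervalIntegrable _ _)
        (by apply Continuous.intervalIntegrable
            apply continuous_finset_sum
            intro m _
            exact ((contExpC _).mul (γP_cont μ ρ z α hy m)).add
              ((contExpC _).mul (γM_cont μ ρ z α hy m))),
      intervalIntegral.integral_finset_sum]
    · congr 1
      apply Finset.sum_congr rfl
      intro m _
      exact intervalIntegral.integral_add
        (((contExpC _).mul (γP_cont μ ρ z α hy m)).intervalIntegrable _ _)
        (((contExpC _).mul (γM_cont μ ρ z α hy m)).intervalIntegrable _ _)
    · intro m _
      exact (((contExpC _).mul (γP_cont μ ρ z α hy m)).add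
        ((contExpC _).mul (γM_cont μ ρ z α hy m))).intervalIntegrable _ _
  set YR := ∫ r in x..(1:ℝ), Complex.exp (-(z + μ i) * r) * (ytc y r / (z + α)) with hYR
  have hres1 : ∀ m : Fin N, (∫ s in x..(1:ℝ), Complex.exp ((ρ m - (z + μ i)) * s) * gP μ ρ z α y m s)
      = betaV μ z ρ (Sum.inl m) * YR := by
    intro m
    rw [hYR, ← intervalIntegral.integral_const_mul]
    apply intervalIntegral.integral_congr
    intro s _
    beta_reduce
    unfold gP
    rw [show (ρ m - (z + μ i)) * (s:ℂ) = -(z + μ i) * s + ρ m * s by ring, Complex.exp_add,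
        show (-ρ m) * (s:ℂ) = -(ρ m * s) by ring, Complex.exp_neg]
    have h2 : Complex.exp (ρ m * s) * (Complex.exp (ρ m * s))⁻¹ = 1 :=
      mul_inv_cancel₀ (Complex.exp_ne_zero _)
    linear_combination Complex.exp (-(z + μ i) * s) * (ytc y s / (z + α))
      * betaV μ z ρ (Sum.inl m) * h2
  have hres2 : ∀ m : Fin N, (∫ s in x..(1:ℝ), Complex.exp ((-ρ m - (z + μ i)) * s) * gM μ ρ z α y m s)
      = betaV μ z ρ (Sum.inr m) * YR := by
    intro m
    rw [hYR, ← intervalIntegral.integral_const_mul]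
    apply intervalIntegral.integral_congr
    intro s _
    beta_reduce
    unfold gM
    rw [show (-ρ m - (z + μ i)) * (s:ℂ) = -(z + μ i) * s + -(ρ m * s) by ring, Complex.exp_add,
        Complex.exp_neg]
    have h2 : Complex.exp (ρ m * s) * (Complex.exp (ρ m * s))⁻¹ = 1 :=
      mul_inv_cancel₀ (Complex.exp_ne_zero _)
    linear_combination Complex.exp (-(z + μ i) * s) * (ytc y s / (z + α))
      * betaV μ z ρ (Sum.inr m) * h2
  have hparts1 : ∀ m : Fin N, (∫ r in x..(1:ℝ), Complex.exp ((ρ m - (z + μ i)) * r) * γP μ ρ z α y m r)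
      = Complex.exp ((ρ m - (z + μ i)) * (1:ℝ)) / (ρ m - (z + μ i)) * γP μ ρ z α y m 1
        - Complex.exp ((ρ m - (z + μ i)) * x) / (ρ m - (z + μ i)) * γP μ ρ z α y m x
        - (1 / (ρ m - (z + μ i))) * (betaV μ z ρ (Sum.inl m) * YR) := by
    intro m
    rw [← hres1 m]
    unfold γP
    exact partsExp _ (gP_cont μ ρ z α hy m) _ _ (hm' m) (-1) x 1
  have hparts2 : ∀ m : Fin N, (∫ r in x..(1:ℝ), Complex.exp ((-ρ m - (z + μ i)) * r) * γM μ ρ z α y m r)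
      = Complex.exp ((-ρ m - (z + μ i)) * (1:ℝ)) / (-ρ m - (z + μ i)) * γM μ ρ z α y m 1
        - Complex.exp ((-ρ m - (z + μ i)) * x) / (-ρ m - (z + μ i)) * γM μ ρ z α y m x
        - (1 / (-ρ m - (z + μ i))) * (betaV μ z ρ (Sum.inr m) * YR) := by
    intro m
    rw [← hres2 m]
    unfold γM
    exact partsExp _ (gM_cont μ ρ z α hy m) _ _ (hp' m) (-1) x 1
  rw [hsplit, Finset.sum_congr rfl (fun m _ => by rw [hparts1 m, hparts2 m])]
  have split3 : ∀ m ∈ Finset.univ,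
      (Complex.exp ((ρ m - (z + μ i)) * (1:ℝ)) / (ρ m - (z + μ i)) * γP μ ρ z α y m 1
        - Complex.exp ((ρ m - (z + μ i)) * x) / (ρ m - (z + μ i)) * γP μ ρ z α y m x
        - (1 / (ρ m - (z + μ i))) * (betaV μ z ρ (Sum.inl m) * YR))
      + (Complex.exp ((-ρ m - (z + μ i)) * (1:ℝ)) / (-ρ m - (z + μ i)) * γM μ ρ z α y m 1
        - Complex.exp ((-ρ m - (z + μ i)) * x) / (-ρ m - (z + μ i)) * γM μ ρ z α y m x
        - (1 / (-ρ m - (z + μ i))) * (betaV μ z ρ (Sum.inr m) * YR))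
      = (-(Complex.exp ((ρ m - (z + μ i)) * x) / (ρ m - (z + μ i))) * γP μ ρ z α y m x
          - Complex.exp ((-ρ m - (z + μ i)) * x) / (-ρ m - (z + μ i)) * γM μ ρ z α y m x)
        - (((1 / (ρ m - (z + μ i))) * (betaV μ z ρ (Sum.inl m) * YR)
            + (1 / (-ρ m - (z + μ i))) * (betaV μ z ρ (Sum.inr m) * YR))
          - (Complex.exp ((ρ m - (z + μ i)) * (1:ℝ)) / (ρ m - (z + μ i)) * γP μ ρ z α y m 1
            + Complex.exp ((-ρ m - (z + μ i)) * (1:ℝ)) / (-ρ m - (z + μ i)) * γM μ ρ z α y m 1)) := by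
    intro m _
    ring
  rw [Finset.sum_congr rfl split3, Finset.sum_sub_distrib, Finset.sum_sub_distrib,
    Finset.sum_sub_distrib]
  have fact1 : (∑ m, (Complex.exp ((ρ m - (z + μ i)) * (1:ℝ)) / (ρ m - (z + μ i)) * γP μ ρ z α y m 1
      + Complex.exp ((-ρ m - (z + μ i)) * (1:ℝ)) / (-ρ m - (z + μ i)) * γM μ ρ z α y m 1)) = 0 := by
    have e : ∀ m ∈ Finset.univ,
        Complex.exp ((ρ m - (z + μ i)) * (1:ℝ)) / (ρ m - (z + μ i)) * γP μ ρ z α y m 1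
          + Complex.exp ((-ρ m - (z + μ i)) * (1:ℝ)) / (-ρ m - (z + μ i)) * γM μ ρ z α y m 1
        = (-Complex.exp (-(z + μ i))) * (Complex.exp (ρ m) / (z + μ i - ρ m) * γP μ ρ z α y m 1
            + Complex.exp (-ρ m) / (z + μ i + ρ m) * γM μ ρ z α y m 1) := by
      intro m _
      rw [show ((ρ m - (z + μ i)) * ((1:ℝ):ℂ)) = ρ m + -(z + μ i) by push_cast; ring,
          show ((-ρ m - (z + μ i)) * ((1:ℝ):ℂ)) = -ρ m + -(z + μ i) by push_cast; ring,
          Complex.exp_add, Complex.exp_add,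
          show ρ m - (z + μ i) = -(z + μ i - ρ m) by ring,
          show -ρ m - (z + μ i) = -(z + μ i + ρ m) by ring,
          div_neg, div_neg]
      ring
    rw [Finset.sum_congr rfl e, ← Finset.mul_sum, Finset.sum_add_distrib,
      Sb2 μ ρ z α y hS i, mul_zero]
  have fact2 : (∑ m, ((1 / (ρ m - (z + μ i))) * (betaV μ z ρ (Sum.inl m) * YR)
      + (1 / (-ρ m - (z + μ i))) * (betaV μ z ρ (Sum.inr m) * YR))) = YR := by
    have e : ∀ m ∈ Finset.univ,
        (1 / (ρ m - (z + μ i))) * (betaV μ z ρ (Sum.inl m) * YR)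
          + (1 / (-ρ m - (z + μ i))) * (betaV μ z ρ (Sum.inr m) * YR)
        = -((1 / (z + μ i - ρ m) * betaV μ z ρ (Sum.inl m)
            + 1 / (z + μ i + ρ m) * betaV μ z ρ (Sum.inr m)) * YR) := by
      intro m _
      rw [show ρ m - (z + μ i) = -(z + μ i - ρ m) by ring,
          show -ρ m - (z + μ i) = -(z + μ i + ρ m) by ring, div_neg, div_neg]
      ring
    rw [Finset.sum_congr rfl e, Finset.sum_neg_distrib, ← Finset.sum_mul,
      Finset.sum_add_distrib, Trow_inl μ z ρ hT i]
    ring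
  rw [fact1, fact2]
  ring

lemma scalarCombine (k rm P M Em Ep A B C D Rp Rm : ℂ)
    (hm : k - rm ≠ 0) (hp : k + rm ≠ 0)
    (hA : Em * A = Rp) (hB : Em * B = Rm) (hC : Ep * C = Rp) (hD : Ep * D = Rm) :
    Em * (A / (k + rm) * P + B / (k - rm) * M)
      + Ep * (-(C / (rm - k)) * P - D / (-rm - k) * M)
    = 2 * k / (k ^ 2 - rm ^ 2) * (P * Rp + M * Rm) := by
  have h2 : k ^ 2 - rm ^ 2 ≠ 0 := by
    intro h
    exact mul_ne_zero hm hp (by linear_combination h)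
  have hcoef : 1 / (k + rm) + 1 / (k - rm) = 2 * k / (k ^ 2 - rm ^ 2) := by
    field_simp
    ring
  rw [show rm - k = -(k - rm) by ring, show -rm - k = -(k + rm) by ring, div_neg, div_neg]
  linear_combination (P / (k + rm)) * hA + (M / (k - rm)) * hB + (P / (k - rm)) * hC
    + (M / (k + rm)) * hD + (P * Rp + M * Rm) * hcoef

lemma perI {N : ℕ} (μ ρ : Fin N → ℂ) (z α : ℂ) {y : ℝ → ℂ}
    (hy : ContinuousOn y (Icc (-1) 1))
    (hT : IsUnit (Tmat μ z ρ).det) (hS : (Smat μ z ρ).det ≠ 0)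
    (i : Fin N)
    (hm : ∀ m, z + μ i - ρ m ≠ 0) (hp : ∀ m, z + μ i + ρ m ≠ 0)
    {x : ℝ} (hx : x ∈ Icc (-1:ℝ) 1) :
    ∫ r in (-1:ℝ)..1, Complex.exp (-(z + μ i) * ((|x - r|:ℝ):ℂ)) * qT μ ρ z α y r
      = ∑ m, 2 * (z + μ i) / ((z + μ i) ^ 2 - ρ m ^ 2)
          * (γP μ ρ z α y m x * Complex.exp (ρ m * x)
            + γM μ ρ z α y m x * Complex.exp (-ρ m * x)) := by
  have cqt := qT_cont μ ρ z α hy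
  have cK : Continuous fun r : ℝ =>
      Complex.exp (-(z + μ i) * ((|x - r|:ℝ):ℂ)) * qT μ ρ z α y r :=
    (Complex.continuous_exp.comp (continuous_const.mul
      (Complex.continuous_ofReal.comp ((continuous_const.sub continuous_id).abs)))).mul cqt
  have h12 : (∫ r in (-1:ℝ)..1, Complex.exp (-(z + μ i) * ((|x - r|:ℝ):ℂ)) * qT μ ρ z α y r)
      = (∫ r in (-1:ℝ)..x, Complex.exp (-(z + μ i) * ((|x - r|:ℝ):ℂ)) * qT μ ρ z α y r)
        + ∫ r in x..(1:ℝ), Complex.exp (-(z + μ i) * ((|x - r|:ℝ):ℂ)) * qT μ ρ z α y r :=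
    (intervalIntegral.integral_add_adjacent_intervals
      (cK.intervalIntegrable _ _) (cK.intervalIntegrable _ _)).symm
  have hLc : (∫ r in (-1:ℝ)..x, Complex.exp (-(z + μ i) * ((|x - r|:ℝ):ℂ)) * qT μ ρ z α y r)
      = Complex.exp (-(z + μ i) * x)
        * ∫ r in (-1:ℝ)..x, Complex.exp ((z + μ i) * r) * qT μ ρ z α y r := by
    rw [← intervalIntegral.integral_const_mul]
    apply intervalIntegral.integral_congr
    intro r hr
    rw [Set.uIcc_of_le hx.1] at hr
    beta_reduce
    rw [abs_of_nonneg (sub_nonneg.2 hr.2),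
      show (-(z + μ i) * (((x - r : ℝ)):ℂ)) = -(z + μ i) * x + (z + μ i) * r by push_cast; ring,
      Complex.exp_add, mul_assoc]
  have hRc : (∫ r in x..(1:ℝ), Complex.exp (-(z + μ i) * ((|x - r|:ℝ):ℂ)) * qT μ ρ z α y r)
      = Complex.exp ((z + μ i) * x)
        * ∫ r in x..(1:ℝ), Complex.exp (-(z + μ i) * r) * qT μ ρ z α y r := by
    rw [← intervalIntegral.integral_const_mul]
    apply intervalIntegral.integral_congr
    intro r hr
    rw [Set.uIcc_of_le hx.2] at hr
    beta_reduce
    rw [abs_sub_comm, abs_of_nonneg (sub_nonneg.2 hr.1),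
      show (-(z + μ i) * (((r - x : ℝ)):ℂ)) = (z + μ i) * x + -(z + μ i) * r by push_cast; ring,
      Complex.exp_add, mul_assoc]
  rw [h12, hLc, hRc, leftL μ ρ z α hy hT hS i hm hp x, rightR μ ρ z α hy hT hS i hm hp x,
    Finset.mul_sum, Finset.mul_sum, ← Finset.sum_add_distrib]
  apply Finset.sum_congr rfl
  intro m _
  exact scalarCombine (z + μ i) (ρ m) (γP μ ρ z α y m x) (γM μ ρ z α y m x)
    (Complex.exp (-(z + μ i) * x)) (Complex.exp ((z + μ i) * x))
    (Complex.exp ((z + μ i + ρ m) * x)) (Complex.exp ((z + μ i - ρ m) * x))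
    (Complex.exp ((ρ m - (z + μ i)) * x)) (Complex.exp ((-ρ m - (z + μ i)) * x))
    (Complex.exp (ρ m * x)) (Complex.exp (-ρ m * x))
    (hm m) (hp m)
    (by rw [← Complex.exp_add]; congr 1; push_cast; ring)
    (by rw [← Complex.exp_add]; congr 1; push_cast; ring)
    (by rw [← Complex.exp_add]; congr 1; push_cast; ring)
    (by rw [← Complex.exp_add]; congr 1; push_cast; ring)


/-- Under the stated nondegeneracy conditions on `z` (not `−α`, not in
`𝒮`, the characteristic polynomial has `2N` distinct roots `±ρᵢ` with `kⱼ ≠ ±ρᵢ`, `T(z)`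
invertible, `det S(z) ≠ 0`), the explicit variation-of-constants function `q` built from a
continuous `y` satisfies `Δ(z)q = y` on `[−1,1]`. -/
theorem stmt15 (N : ℕ) (hN : 1 ≤ N) (τ0 : ℝ) (hτ0 : 0 ≤ τ0) (α : ℂ)
    (c μ : Fin N → ℂ) (hc : ∀ i, c i ≠ 0) (hμ : Function.Injective μ)
    (z : ℂ) (hz1 : z ≠ -α) (hz2 : z ∉ badSet μ)
    (ρ : Fin N → ℂ)
    (hρ0 : ∀ i, ρ i ≠ 0)
    (hρd : ∀ i j, i ≠ j → ρ i ≠ ρ j ∧ ρ i ≠ -ρ j)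
    (hroot : ∀ i, charP c μ τ0 α z (ρ i) = 0)
    (hkρ : ∀ i j, z + μ j ≠ ρ i ∧ z + μ j ≠ -ρ i)
    (hT : IsUnit (Tmat μ z ρ).det)
    (hS : (Smat μ z ρ).det ≠ 0)
    (y : ℝ → ℂ) (hy : ContinuousOn y (Icc (-1) 1)) :
    ∀ x ∈ Icc (-1 : ℝ) 1, DeltaOp c μ τ0 α z (qRes μ ρ z α y) x = y x := by
  intro x hx
  have ha : z + α ≠ 0 := fun h => hz1 (by linear_combination h)
  have hm : ∀ i m, z + μ i - ρ m ≠ 0 := fun i m => sub_ne_zero.2 (hkρ m i).1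
  have hp : ∀ i m, z + μ i + ρ m ≠ 0 := fun i m h => (hkρ m i).2 (by linear_combination h)
  have cqt := qT_cont μ ρ z α hy
  unfold DeltaOp
  have hint : (∫ r in (-1:ℝ)..1, kerJ0 c μ x r * Complex.exp (-z * (τ0:ℂ))
        * Complex.exp (-z * ((|x - r|:ℝ):ℂ)) * qRes μ ρ z α y r)
      = ∑ i, (c i * Complex.exp (-z * (τ0:ℂ)))
          * ∫ r in (-1:ℝ)..1, Complex.exp (-(z + μ i) * ((|x - r|:ℝ):ℂ)) * qT μ ρ z α y r := by
    have e : Set.EqOn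
        (fun r : ℝ => kerJ0 c μ x r * Complex.exp (-z * (τ0:ℂ))
          * Complex.exp (-z * ((|x - r|:ℝ):ℂ)) * qRes μ ρ z α y r)
        (fun r : ℝ => ∑ i, (c i * Complex.exp (-z * (τ0:ℂ)))
          * (Complex.exp (-(z + μ i) * ((|x - r|:ℝ):ℂ)) * qT μ ρ z α y r))
        (Set.uIcc (-1) 1) := by
      intro r hr
      rw [Set.uIcc_of_le (by norm_num : (-1:ℝ) ≤ 1)] at hr
      beta_reduce
      rw [qRes_eq_qT μ ρ z α y hr]
      unfold kerJ0
      rw [Finset.sum_mul, Finset.sum_mul, Finset.sum_mul]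
      apply Finset.sum_congr rfl
      intro i _
      rw [show -(z + μ i) * ((|x - r|:ℝ):ℂ) = -μ i * (|x - r|:ℝ) + -z * ((|x - r|:ℝ):ℂ) by
            push_cast; ring,
          Complex.exp_add]
      ring
    rw [intervalIntegral.integral_congr e, intervalIntegral.integral_finset_sum]
    · exact Finset.sum_congr rfl fun i _ => intervalIntegral.integral_const_mul _ _
    · intro i _
      exact (continuous_const.mul ((Complex.continuous_exp.comp (continuous_const.mul
        (Complex.continuous_ofReal.comp ((continuous_const.sub continuous_id).abs)))).mul
          cqt)).intervalIntegrable _ _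
  rw [qRes_eq_qT μ ρ z α y hx, hint,
    Finset.sum_congr rfl (fun i _ => by rw [perI μ ρ z α hy hT hS i (hm i) (hp i) hx])]
  have hswap : (∑ i, (c i * Complex.exp (-z * (τ0:ℂ)))
        * ∑ m, 2 * (z + μ i) / ((z + μ i) ^ 2 - ρ m ^ 2)
            * (γP μ ρ z α y m x * Complex.exp (ρ m * x)
              + γM μ ρ z α y m x * Complex.exp (-ρ m * x)))
      = ∑ m, (z + α) * (γP μ ρ z α y m x * Complex.exp (ρ m * x)
              + γM μ ρ z α y m x * Complex.exp (-ρ m * x)) := by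
    rw [Finset.sum_congr rfl (fun i (_ : i ∈ Finset.univ) => Finset.mul_sum _ _ _),
      Finset.sum_comm]
    apply Finset.sum_congr rfl
    intro m _
    have hk : ∀ j, ρ m ^ 2 - (z + μ j) ^ 2 ≠ 0 := fun j h =>
      mul_ne_zero (hm j m) (hp j m) (by linear_combination -h)
    have hcc := charP_coeff c μ τ0 α z (ρ m) (hroot m) hk
    calc ∑ i, (c i * Complex.exp (-z * (τ0:ℂ)))
          * (2 * (z + μ i) / ((z + μ i) ^ 2 - ρ m ^ 2)
            * (γP μ ρ z α y m x * Complex.exp (ρ m * x)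
              + γM μ ρ z α y m x * Complex.exp (-ρ m * x)))
        = (Complex.exp (-z * (τ0:ℂ))
            * ∑ i, c i * (2 * (z + μ i) / ((z + μ i) ^ 2 - ρ m ^ 2)))
          * (γP μ ρ z α y m x * Complex.exp (ρ m * x)
              + γM μ ρ z α y m x * Complex.exp (-ρ m * x)) := by
          rw [Finset.mul_sum, Finset.sum_mul]
          apply Finset.sum_congr rfl
          intro i _
          ring
      _ = (z + α) * (γP μ ρ z α y m x * Complex.exp (ρ m * x)
              + γM μ ρ z α y m x * Complex.exp (-ρ m * x)) := by rw [hcc]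
  rw [hswap]
  unfold qT
  rw [ytc_eq y hx, mul_add, Finset.mul_sum, add_sub_cancel_right, mul_comm,
    div_mul_cancel₀ _ ha]
end
end

section
/- Let Y be a complex Banach space, h > 0, X := C([−h,0],Y), L : X → Y a bounded linear operator, and α, λ ∈ ℂ. Define L_λ ∈ L(Y) by L_λ y := L(θ ↦ e^{λθ}·y) and Δ(λ) := (λ+α)·Id_Y − L_λ. Assume Δ(λ) : Y → Y is bijective with bounded inverse. Then for every y ∈ Y, the function ψ(θ) := e^{λθ}·Δ(λ)^{−1}y is the unique continuously differentiable function ψ : [−h,0] → Y satisfying both λ·ψ(0) + α·ψ(0) − Lψ = y and ψ′(θ) = λ·ψ(θ) for all θ ∈ [−h,0]. -/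
open Set

/-- The continuous map `θ ↦ e^{λθ}·v` on `[-h,0]`, for `v` in a complex normed space. -/
noncomputable def expTensor {Y : Type*} [NormedAddCommGroup Y] [NormedSpace ℂ Y]
    (h : ℝ) (lam : ℂ) (v : Y) : C(Set.Icc (-h) (0 : ℝ), Y) :=
  ⟨fun θ => Complex.exp (lam * ((θ : ℝ) : ℂ)) • v, by fun_prop⟩

lemma expDeriv_s16 {Y : Type*} [NormedAddCommGroup Y] [NormedSpace ℂ Y]
    (lam : ℂ) (v : Y) (t : ℝ) :
    HasDerivAt (fun s : ℝ => Complex.exp (lam * (s : ℂ)) • v)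
      ((lam * Complex.exp (lam * (t : ℂ))) • v) t := by
  have h1 : HasDerivAt (fun s : ℝ => lam * (s : ℂ)) lam t := by
    simpa using (Complex.ofRealCLM.hasDerivAt (x := t)).const_mul lam
  have h2 := (Complex.hasDerivAt_exp (lam * (t : ℂ))).comp t h1
  simpa [mul_comm] using h2.smul_const v

/-- If `Δ(λ) = (λ+α)·Id − L_λ` is bijective with bounded inverse, then for
every `y ∈ Y` the function `ψ(θ) = e^{λθ}·Δ(λ)⁻¹y` is the unique `C¹` function on `[−h,0]`
satisfying `λψ(0) + αψ(0) − Lψ = y` and `ψ′ = λψ`. -/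
theorem stmt16 {Y : Type*} [NormedAddCommGroup Y] [NormedSpace ℂ Y] [CompleteSpace Y]
    {h : ℝ} (hh : 0 < h)
    (L : C(Set.Icc (-h) (0 : ℝ), Y) →L[ℂ] Y) (α lam : ℂ)
    (Δinv : Y →L[ℂ] Y)
    (hΔ1 : ∀ v : Y, Δinv ((lam + α) • v - L (expTensor h lam v)) = v)
    (hΔ2 : ∀ v : Y, (lam + α) • Δinv v - L (expTensor h lam (Δinv v)) = v)
    (y : Y) :
    (∀ θ : Set.Icc (-h) (0 : ℝ),
      HasDerivWithinAt (fun s : ℝ => Complex.exp (lam * (s : ℂ)) • Δinv y)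
        (lam • (Complex.exp (lam * ((θ : ℝ) : ℂ)) • Δinv y)) (Set.Icc (-h) 0) (θ : ℝ)) ∧
    (lam • expTensor h lam (Δinv y) ⟨0, by constructor <;> linarith⟩
      + α • expTensor h lam (Δinv y) ⟨0, by constructor <;> linarith⟩
      - L (expTensor h lam (Δinv y)) = y) ∧
    ∀ ψ : C(Set.Icc (-h) (0 : ℝ), Y),
      (∀ θ : Set.Icc (-h) (0 : ℝ),
        HasDerivWithinAt (fun s : ℝ => ψ (Set.projIcc (-h) 0 (by linarith) s)) (lam • ψ θ)
          (Set.Icc (-h) 0) (θ : ℝ)) →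
      lam • ψ ⟨0, by constructor <;> linarith⟩ + α • ψ ⟨0, by constructor <;> linarith⟩
        - L ψ = y →
      ψ = expTensor h lam (Δinv y) := by
  have h0mem : (0 : ℝ) ∈ Set.Icc (-h) (0 : ℝ) := ⟨by linarith, le_refl _⟩
  refine ⟨?_, ?_, ?_⟩
  · intro θ
    have := (expDeriv_s16 lam (Δinv y) (θ : ℝ)).hasDerivWithinAt (s := Set.Icc (-h) 0)
    simpa [smul_smul] using this
  · have h0 : expTensor h lam (Δinv y) ⟨0, h0mem⟩ = Δinv y := by
      simp [expTensor]
    rw [h0]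
    rw [← add_smul]
    exact hΔ2 y
  · intro ψ hderiv hbc
    set ψ0 := ψ ⟨0, h0mem⟩ with hψ0
    -- g s = exp(-(lam s)) • ψ (projIcc s) has zero derivative on Icc
    have hg : ∀ t ∈ Set.Icc (-h) (0 : ℝ),
        HasDerivWithinAt
          (fun s : ℝ => Complex.exp (-(lam * (s : ℂ))) •
            ψ (Set.projIcc (-h) 0 (by linarith) s))
          0 (Set.Icc (-h) 0) t := by
      intro t ht
      have hc : HasDerivWithinAt (fun s : ℝ => Complex.exp (-(lam * (s : ℂ))))
          ((-lam) * Complex.exp ((-lam) * (t : ℂ))) (Set.Icc (-h) 0) t := by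
        have := (expDeriv_s16 (-lam) (1 : ℂ) t).hasDerivWithinAt (s := Set.Icc (-h) 0)
        simpa [neg_mul] using this
      have hf := hderiv ⟨t, ht⟩
      have := hc.smul hf
      convert this using 1
      · rfl
      have hpt : ψ (Set.projIcc (-h) 0 (by linarith) t) = ψ ⟨t, ht⟩ := by
        congr 1
        exact Set.projIcc_of_mem (by linarith) ht
      rw [hpt]
      simp only [smul_smul, neg_mul, neg_smul,
        mul_comm (Complex.exp (-(lam * (t : ℂ)))) lam, add_neg_cancel]
    have hconst : ∀ t ∈ Set.Icc (-h) (0 : ℝ),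
        Complex.exp (-(lam * (t : ℂ))) • ψ (Set.projIcc (-h) 0 (by linarith) t)
          = ψ0 := by
      intro t ht
      have := (convex_Icc (-h) (0:ℝ)).norm_image_sub_le_of_norm_hasDerivWithin_le
        (f := fun s : ℝ => Complex.exp (-(lam * (s : ℂ))) •
          ψ (Set.projIcc (-h) 0 (by linarith) s)) (C := 0)
        hg (fun x _ => by simp) h0mem ht
      have heq := norm_le_zero_iff.mp (by simpa using this)
      have := sub_eq_zero.mp heq
      rw [this]
    have hψeq : ψ = expTensor h lam ψ0 := by
      ext θ
      have := hconst (θ : ℝ) θ.2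
      have hpt : ψ (Set.projIcc (-h) 0 (by linarith) (θ : ℝ)) = ψ θ := by
        congr 1
        exact Set.projIcc_val (by linarith) θ
      rw [hpt] at this
      have : ψ θ = Complex.exp (lam * ((θ : ℝ) : ℂ)) • ψ0 := by
        have h2 := congrArg (fun z => Complex.exp (lam * ((θ : ℝ) : ℂ)) • z) this
        simpa [smul_smul, ← Complex.exp_add] using h2
      simpa [expTensor] using this
    have hbc' : (lam + α) • ψ0 - L (expTensor h lam ψ0) = y := by
      rw [add_smul, ← hψeq]
      exact hbc
    have : Δinv y = ψ0 := by rw [← hbc']; exact hΔ1 ψ0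
    rw [hψeq, this]
end
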